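/- The n-tangle is invariant under SLOCC operations: if ψ is a pure 2n-qubit state with vectorization |ψ⟩, A_1,...,A_{2n} ∈ SL(2,ℂ) are 2×2 complex matrices of determinant 1, and φ is the 2n-qubit tensor with vectorization |φ⟩ = (A_1 ⊗ ... ⊗ A_{2n})|ψ⟩, then τ_n(φ) = τ_n(ψ), where τ_n is extended to arbitrary (not necessarily normalized) tensors by the same formula. In particular, τ_n is invariant under local unitary transformations U_1 ⊗ ... ⊗ U_{2n} with each U_k ∈ SU(2). -/

import Mathlib

/-- The `k`-th bit (big-endian, `0`-based) of an index `j`, so that for `j < 2^n`,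
`j = Σ_k (bit j k) · 2^{n-1-k}` (lexicographic order of bit strings). -/
def qbit (n : ℕ) (j : ℕ) (k : Fin n) : Fin 2 :=
  ⟨j / 2 ^ (n - 1 - (k : ℕ)) % 2, by omega⟩

/-- The vectorization `|ψ⟩ ∈ ℂ^{4^n}` of a `2n`-qubit tensor, listing the entries in
lexicographic order of the binary index `j = Σ_k i_k 2^{2n−k}`. -/
noncomputable def vecQ (n : ℕ) (ψ : (Fin (2 * n) → Fin 2) → ℂ) : Fin (4 ^ n) → ℂ :=
  fun j => ψ (qbit (2 * n) (j : ℕ))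

/-- The second Pauli matrix `σ_y = [[0, −i], [i, 0]]`. -/
noncomputable def pauliY : Matrix (Fin 2) (Fin 2) ℂ :=
  !![0, -Complex.I; Complex.I, 0]

/-- The Kronecker product `A_1 ⊗ ... ⊗ A_{2n}` of 2×2 matrices as a `4^n × 4^n` matrix
(indices encoded lexicographically by their `2n` bits). -/
noncomputable def kronPowQ (n : ℕ) (A : Fin (2 * n) → Matrix (Fin 2) (Fin 2) ℂ) :
    Matrix (Fin (4 ^ n)) (Fin (4 ^ n)) ℂ :=
  fun i j => ∏ k : Fin (2 * n), A k (qbit (2 * n) (i : ℕ) k) (qbit (2 * n) (j : ℕ) k)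

/-- The `n`-tangle of an arbitrary (not necessarily normalized) `2n`-qubit tensor `χ`:
`τ_n(χ) = |⟨χ| σ_y^{⊗2n} |χ*⟩|²`. -/
noncomputable def nTangle (n : ℕ) (χ : (Fin (2 * n) → Fin 2) → ℂ) : ℝ :=
  norm
      (dotProduct (fun j => (starRingEnd ℂ) (vecQ n χ j))
        ((kronPowQ n fun _ => pauliY).mulVec (fun j => (starRingEnd ℂ) (vecQ n χ j)))) ^ 2

open Matrix

lemma symY (M : Matrix (Fin 2) (Fin 2) ℂ) (h : M.det = 1) :
    Mᵀ * pauliY * M = pauliY := by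
  have h2 : M 0 0 * M 1 1 - M 0 1 * M 1 0 = 1 := by rw [← Matrix.det_fin_two]; exact h
  have ht : (!![M 0 0, M 0 1; M 1 0, M 1 1])ᵀ = !![M 0 0, M 1 0; M 0 1, M 1 1] := by
    ext i j; fin_cases i <;> fin_cases j <;> rfl
  rw [Matrix.eta_fin_two M, ht, pauliY, Matrix.mul_fin_two, Matrix.mul_fin_two]
  rw [← Matrix.ext_iff]
  simp only [Fin.forall_fin_two, Matrix.cons_val_zero, Matrix.cons_val_one, Matrix.head_cons,
    Matrix.of_apply, Matrix.cons_val', Matrix.empty_val', Matrix.cons_val_fin_one,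
    Matrix.head_fin_const]
  refine ⟨⟨?_, ?_⟩, ?_, ?_⟩ <;>
    first
      | linear_combination Complex.I * h2
      | linear_combination (-Complex.I) * h2
      | ring

lemma qbit_inj (n : ℕ) : Function.Injective (fun j : Fin (4 ^ n) => qbit (2 * n) (j : ℕ)) := by
  intro a b hab
  have h4 : (4 : ℕ) ^ n = 2 ^ (2 * n) := by rw [pow_mul]; norm_num
  have ha : (a : ℕ) < 2 ^ (2 * n) := h4 ▸ a.isLt
  have hb : (b : ℕ) < 2 ^ (2 * n) := h4 ▸ b.isLt
  apply Fin.ext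
  apply Nat.eq_of_testBit_eq
  intro t
  by_cases htm : t < 2 * n
  · have h := congrFun hab ⟨2 * n - 1 - t, by omega⟩
    simp only [qbit, Fin.mk.injEq] at h
    have he : 2 * n - 1 - (2 * n - 1 - t) = t := by omega
    rw [he] at h
    rw [Nat.testBit_eq_decide_div_mod_eq, Nat.testBit_eq_decide_div_mod_eq, h]
  · rw [Nat.testBit_lt_two_pow (lt_of_lt_of_le ha (Nat.pow_le_pow_right (by norm_num) (by omega))),
      Nat.testBit_lt_two_pow (lt_of_lt_of_le hb (Nat.pow_le_pow_right (by norm_num) (by omega)))]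

noncomputable def qe (n : ℕ) : Fin (4 ^ n) ≃ (Fin (2 * n) → Fin 2) :=
  Equiv.ofBijective _ ((Fintype.bijective_iff_injective_and_card _).2
    ⟨qbit_inj n, by simp [Fintype.card_fun]; rw [pow_mul]; norm_num⟩)

lemma kron_mul (n : ℕ) (A B : Fin (2 * n) → Matrix (Fin 2) (Fin 2) ℂ) :
    kronPowQ n A * kronPowQ n B = kronPowQ n (fun k => A k * B k) := by
  ext i j
  simp only [Matrix.mul_apply, kronPowQ]
  calc ∑ m : Fin (4 ^ n), (∏ k, A k (qbit (2*n) (i:ℕ) k) (qbit (2*n) (m:ℕ) k)) *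
        ∏ k, B k (qbit (2*n) (m:ℕ) k) (qbit (2*n) (j:ℕ) k)
      = ∑ f : Fin (2*n) → Fin 2, (∏ k, A k (qbit (2*n) (i:ℕ) k) (f k)) *
        ∏ k, B k (f k) (qbit (2*n) (j:ℕ) k) :=
        Equiv.sum_comp (qe n) (fun f => (∏ k, A k (qbit (2*n) (i:ℕ) k) (f k)) *
          ∏ k, B k (f k) (qbit (2*n) (j:ℕ) k))
    _ = ∑ f : Fin (2*n) → Fin 2, ∏ k, (A k (qbit (2*n) (i:ℕ) k) (f k) *
          B k (f k) (qbit (2*n) (j:ℕ) k)) := by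
        simp_rw [Finset.prod_mul_distrib]
    _ = ∏ k, ∑ b : Fin 2, A k (qbit (2*n) (i:ℕ) k) b * B k b (qbit (2*n) (j:ℕ) k) := by
        rw [Finset.prod_univ_sum, Fintype.piFinset_univ]
    _ = ∏ k, (A k * B k) (qbit (2*n) (i:ℕ) k) (qbit (2*n) (j:ℕ) k) := by
        simp [Matrix.mul_apply]

lemma kron_transpose (n : ℕ) (A : Fin (2 * n) → Matrix (Fin 2) (Fin 2) ℂ) :
    (kronPowQ n A)ᵀ = kronPowQ n (fun k => (A k)ᵀ) := by
  ext i j; simp [kronPowQ]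

lemma kron_map (n : ℕ) (A : Fin (2 * n) → Matrix (Fin 2) (Fin 2) ℂ) :
    (kronPowQ n A).map (starRingEnd ℂ) = kronPowQ n (fun k => (A k).map (starRingEnd ℂ)) := by
  ext i j; simp [kronPowQ, Matrix.map_apply]

lemma tangle_inv (n : ℕ) (ψ φ : (Fin (2 * n) → Fin 2) → ℂ)
    (A : Fin (2 * n) → Matrix (Fin 2) (Fin 2) ℂ) (hA : ∀ k, (A k).det = 1)
    (hφ : vecQ n φ = (kronPowQ n A).mulVec (vecQ n ψ)) :
    nTangle n φ = nTangle n ψ := by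
  set Y : Matrix (Fin (4^n)) (Fin (4^n)) ℂ := kronPowQ n fun _ => pauliY with hY
  set w : Fin (4^n) → ℂ := fun j => (starRingEnd ℂ) (vecQ n ψ j) with hwdef
  set Kc : Matrix (Fin (4^n)) (Fin (4^n)) ℂ := (kronPowQ n A).map (starRingEnd ℂ) with hKc
  have hw : (fun j => (starRingEnd ℂ) (vecQ n φ j)) = Kc.mulVec w := by
    funext j
    rw [hφ]
    simp [Matrix.mulVec, dotProduct, hKc, hwdef, Matrix.map_apply, map_sum, _root_.map_mul]
  have key : Kcᵀ * Y * Kc = Y := by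
    rw [hKc, hY, kron_map, kron_transpose, kron_mul, kron_mul]
    exact congrArg (kronPowQ n) (funext fun k =>
      symY _ (by rw [← RingHom.mapMatrix_apply, ← RingHom.map_det, hA k, _root_.map_one]))
  have main : dotProduct (Kc.mulVec w) (Y.mulVec (Kc.mulVec w))
      = dotProduct w (Y.mulVec w) := by
    rw [Matrix.mulVec_mulVec, dotProduct_mulVec,
      show Kc.mulVec w = w ᵥ* Kcᵀ by rw [← Matrix.transpose_transpose Kc, Matrix.mulVec_transpose,
        Matrix.transpose_transpose],
      Matrix.vecMul_vecMul, ← Matrix.mul_assoc, key, ← dotProduct_mulVec]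
  unfold nTangle
  rw [hw, main]


/-- The `n`-tangle is SLOCC invariant: if `ψ` is a pure `2n`-qubit state,
`A_1,...,A_{2n} ∈ SL(2,ℂ)` and `|φ⟩ = (A_1 ⊗ ... ⊗ A_{2n})|ψ⟩`, then `τ_n(φ) = τ_n(ψ)`.
In particular `τ_n` is invariant under local unitary transformations `U_1 ⊗ ... ⊗ U_{2n}`
with each `U_k ∈ SU(2)`. -/
theorem n_tangle_slocc_invariant (n : ℕ) (hn : 1 ≤ n)
    (ψ φ : (Fin (2 * n) → Fin 2) → ℂ)
    (hψ : ∑ i, ‖ψ i‖ ^ 2 = 1)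
    (A : Fin (2 * n) → Matrix (Fin 2) (Fin 2) ℂ) (hA : ∀ k, (A k).det = 1)
    (hφ : vecQ n φ = (kronPowQ n A).mulVec (vecQ n ψ)) :
    nTangle n φ = nTangle n ψ ∧
      ∀ U : Fin (2 * n) → Matrix (Fin 2) (Fin 2) ℂ,
        (∀ k, U k ∈ Matrix.unitaryGroup (Fin 2) ℂ ∧ (U k).det = 1) →
        ∀ φ' : (Fin (2 * n) → Fin 2) → ℂ,
          vecQ n φ' = (kronPowQ n U).mulVec (vecQ n ψ) → nTangle n φ' = nTangle n ψ := by
  exact ⟨tangle_inv n ψ φ A hA hφ,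
    fun U hU φ' hφ' => tangle_inv n ψ φ' U (fun k => (hU k).2) hφ'⟩
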